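/- Let $\Sigma$ be a real $m \times m$ matrix and let $A, B, C \subseteq [m]$ be pairwise disjoint subsets such that the submatrix $\Sigma_{C,C}$ is invertible. Then the submatrix $\Sigma_{A \cup C,\, B \cup C}$ has rank at most $\#C$ if and only if $\det \Sigma_{\{a\} \cup C,\, \{b\} \cup C} = 0$ for all $a \in A$ and $b \in B$. -/

import Mathlib

open Matrix

private lemma rank_submatrix_le_general {R : Type*} [Field R]
    {m n p q : Type*} [Fintype m] [Fintype n] [Fintype p] [Fintype q]
    [DecidableEq m] [DecidableEq n]
    (A : Matrix m n R) (f : p → m) (g : q → n) :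
    (A.submatrix f g).rank ≤ A.rank := by
  have h : A.submatrix f g =
      ((1 : Matrix m m R).submatrix f (Equiv.refl m)) * A *
        ((1 : Matrix n n R).submatrix (Equiv.refl n) g) := by
    rw [Matrix.one_submatrix_mul f (Equiv.refl m) A,
      Matrix.mul_submatrix_one (Equiv.refl n) g]
    simp
  rw [h]
  exact le_trans (Matrix.rank_mul_le_left _ _) (Matrix.rank_mul_le_right _ _)

private lemma rank_submatrix_equiv_general {R : Type*} [Field R]
    {m n p q : Type*} [Fintype m] [Fintype n] [Fintype p] [Fintype q]
    [DecidableEq m] [DecidableEq n] [DecidableEq p] [DecidableEq q]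
    (A : Matrix m n R) (e₁ : p ≃ m) (e₂ : q ≃ n) :
    (A.submatrix e₁ e₂).rank = A.rank := by
  refine le_antisymm (rank_submatrix_le_general A e₁ e₂) ?_
  have := rank_submatrix_le_general (A.submatrix e₁ e₂) e₁.symm e₂.symm
  simpa using this

private noncomputable def unionSumEquiv {m : ℕ} (A C : Finset (Fin m)) (hAC : Disjoint A C) :
    (A : Finset (Fin m)) ⊕ Fin C.card ≃ ((A ∪ C : Finset (Fin m)) : Type) :=
  Equiv.ofBijective
    (Sum.elim (fun a => ⟨a.1, Finset.mem_union_left C a.2⟩)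
      (fun j => ⟨C.orderEmbOfFin rfl j, Finset.mem_union_right A (C.orderEmbOfFin_mem rfl j)⟩))
    (by
      constructor
      · rintro (a | i) (b | j) h <;>
          simp only [Sum.elim_inl, Sum.elim_inr, Subtype.mk.injEq] at h
        · exact congrArg Sum.inl (Subtype.ext h)
        · exact absurd (h ▸ C.orderEmbOfFin_mem rfl j) (Finset.disjoint_left.mp hAC a.2)
        · exact absurd (h ▸ C.orderEmbOfFin_mem rfl i) (Finset.disjoint_left.mp hAC b.2)
        · exact congrArg Sum.inr ((C.orderEmbOfFin rfl).injective h)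
      · rintro ⟨x, hx⟩
        rcases Finset.mem_union.mp hx with hxA | hxC
        · exact ⟨Sum.inl ⟨x, hxA⟩, rfl⟩
        · obtain ⟨j, hj⟩ := (C.orderIsoOfFin rfl).surjective ⟨x, hxC⟩
          refine ⟨Sum.inr j, Subtype.ext ?_⟩
          simpa [Finset.coe_orderIsoOfFin_apply] using congrArg Subtype.val hj)

/-- for a real `m × m` matrix `Σ` and pairwise disjoint
`A, B, C ⊆ [m]` with `Σ_{C,C}` invertible, the submatrix `Σ_{A∪C, B∪C}` has
rank at most `#C` iff `det Σ_{{a}∪C, {b}∪C} = 0` for all `a ∈ A`, `b ∈ B`. -/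
theorem rank_le_card_iff_dets_vanish (m : ℕ) (S : Matrix (Fin m) (Fin m) ℝ)
    (A B C : Finset (Fin m))
    (hAB : Disjoint A B) (hAC : Disjoint A C) (hBC : Disjoint B C)
    (hC : IsUnit (S.submatrix (fun i : C => (i : Fin m)) (fun j : C => (j : Fin m)))) :
    (S.submatrix (fun i : (A ∪ C : Finset (Fin m)) => (i : Fin m))
        (fun j : (B ∪ C : Finset (Fin m)) => (j : Fin m))).rank ≤ C.card ↔
    ∀ a ∈ A, ∀ b ∈ B,
      (S.submatrix (Fin.cons a (fun j : Fin C.card => C.orderEmbOfFin rfl j))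
        (Fin.cons b (fun j : Fin C.card => C.orderEmbOfFin rfl j))).det = 0 := by
  classical
  set g : Fin C.card → Fin m := fun j => C.orderEmbOfFin rfl j with hg
  set D : Matrix (Fin C.card) (Fin C.card) ℝ := S.submatrix g g with hDdef
  set P : Matrix A B ℝ :=
    S.submatrix (fun i : A => (i : Fin m)) (fun j : B => (j : Fin m)) with hP
  set Q : Matrix A (Fin C.card) ℝ := S.submatrix (fun i : A => (i : Fin m)) g with hQ
  set R : Matrix (Fin C.card) B ℝ := S.submatrix g (fun j : B => (j : Fin m)) with hR
  -- D is invertible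
  have hDeq : D = (S.submatrix (fun i : C => (i : Fin m))
      (fun j : C => (j : Fin m))).submatrix (C.orderIsoOfFin rfl).toEquiv
        (C.orderIsoOfFin rfl).toEquiv := by
    ext i j
    simp [hDdef, Finset.coe_orderIsoOfFin_apply, hg]
  have hDdet : IsUnit D.det := by
    rw [hDeq, Matrix.det_submatrix_equiv_self]
    exact (Matrix.isUnit_iff_isUnit_det _).mp hC
  haveI : Invertible D := D.invertibleOfIsUnitDet hDdet
  set X : Matrix A B ℝ := P - Q * ⅟D * R with hX
  -- big matrix has rank of the block matrix
  set u := unionSumEquiv A C hAC with hu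
  set v := unionSumEquiv B C hBC with hv
  have hblock : (S.submatrix (fun i : (A ∪ C : Finset (Fin m)) => (i : Fin m))
      (fun j : (B ∪ C : Finset (Fin m)) => (j : Fin m))).submatrix u v =
        fromBlocks P Q R D := by
    ext i j
    rcases i with i | i <;> rcases j with j | j <;> rfl
  have hrank1 : (S.submatrix (fun i : (A ∪ C : Finset (Fin m)) => (i : Fin m))
      (fun j : (B ∪ C : Finset (Fin m)) => (j : Fin m))).rank = (fromBlocks P Q R D).rank := by
    rw [← rank_submatrix_equiv_general _ u v, hblock]
  have hdetL : IsUnit (fromBlocks (1 : Matrix A A ℝ) (Q * ⅟D)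
      (0 : Matrix (Fin C.card) A ℝ) (1 : Matrix (Fin C.card) (Fin C.card) ℝ)).det := by
    rw [Matrix.det_fromBlocks_zero₂₁]
    simp
  have hdetR : IsUnit (fromBlocks (1 : Matrix B B ℝ) (0 : Matrix B (Fin C.card) ℝ)
      (⅟D * R) (1 : Matrix (Fin C.card) (Fin C.card) ℝ)).det := by
    rw [Matrix.det_fromBlocks_zero₁₂]
    simp
  have hrank2 : (fromBlocks P Q R D).rank = (fromBlocks X 0 0 D).rank := by
    rw [Matrix.fromBlocks_eq_of_invertible₂₂ P Q R D,
      Matrix.rank_mul_eq_left_of_isUnit_det _ _ hdetR,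
      Matrix.rank_mul_eq_right_of_isUnit_det _ _ hdetL]
  -- determinant identity
  have hdetN : ∀ (a : A) (b : B),
      (S.submatrix (Fin.cons (a : Fin m) g) (Fin.cons (b : Fin m) g)).det =
        D.det * X a b := by
    intro a b
    let e : Unit ⊕ Fin C.card ≃ Fin (C.card + 1) :=
      { toFun := Sum.elim (fun _ => 0) Fin.succ
        invFun := fun i => Fin.cases (Sum.inl ()) Sum.inr i
        left_inv := by rintro (⟨⟩ | j) <;> simp
        right_inv := by
          intro i
          induction i using Fin.cases <;> simp }
    have hNe : (S.submatrix (Fin.cons (a : Fin m) g) (Fin.cons (b : Fin m) g)).submatrix e e =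
        fromBlocks (Matrix.of fun _ _ : Unit => S a b)
          (Matrix.of fun (_ : Unit) j => S a (g j))
          (Matrix.of fun i (_ : Unit) => S (g i) b) D := by
      ext i j
      rcases i with i | i <;> rcases j with j | j <;>
        simp [e, hDdef, Fin.cons_zero, Fin.cons_succ]
    rw [← Matrix.det_submatrix_equiv_self e, hNe, Matrix.det_fromBlocks₂₂]
    congr 1
    rw [Matrix.det_unique]
    simp [hX, Matrix.sub_apply, Matrix.mul_apply, hP, hQ, hR]
  -- combine
  rw [hrank1, hrank2]
  constructor
  · intro hle a ha b hb
    have hX0 : X ⟨a, ha⟩ ⟨b, hb⟩ = 0 := by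
      by_contra hab
      have hsub : (fromBlocks X 0 0 D).submatrix
          (Sum.elim (fun _ : Unit => Sum.inl ⟨a, ha⟩) Sum.inr)
          (Sum.elim (fun _ : Unit => Sum.inl ⟨b, hb⟩) Sum.inr) =
            fromBlocks (Matrix.of fun _ _ : Unit => X ⟨a, ha⟩ ⟨b, hb⟩) 0 0 D := by
        ext i j
        rcases i with i | i <;> rcases j with j | j <;> rfl
      have hdets : (fromBlocks (Matrix.of fun _ _ : Unit => X ⟨a, ha⟩ ⟨b, hb⟩)
          (0 : Matrix Unit (Fin C.card) ℝ) (0 : Matrix (Fin C.card) Unit ℝ) D).det =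
            X ⟨a, ha⟩ ⟨b, hb⟩ * D.det := by
        rw [Matrix.det_fromBlocks_zero₂₁, Matrix.det_unique]
        rfl
      have hunit : IsUnit (fromBlocks (Matrix.of fun _ _ : Unit => X ⟨a, ha⟩ ⟨b, hb⟩)
          (0 : Matrix Unit (Fin C.card) ℝ) (0 : Matrix (Fin C.card) Unit ℝ) D) := by
        rw [Matrix.isUnit_iff_isUnit_det, hdets]
        exact (isUnit_iff_ne_zero.mpr hab).mul hDdet
      have hcard := Matrix.rank_of_isUnit _ hunit
      have hle' := le_trans (hsub ▸ rank_submatrix_le_general (fromBlocks X 0 0 D)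
        (Sum.elim (fun _ : Unit => Sum.inl ⟨a, ha⟩) Sum.inr)
        (Sum.elim (fun _ : Unit => Sum.inl ⟨b, hb⟩) Sum.inr)) hle
      rw [hcard] at hle'
      simp only [Fintype.card_sum, Fintype.card_unit, Fintype.card_fin] at hle'
      omega
    rw [hdetN ⟨a, ha⟩ ⟨b, hb⟩, hX0, mul_zero]
  · intro hd
    have hX0 : X = 0 := by
      ext a b
      have h1 := hd a a.2 b b.2
      rw [hdetN a b] at h1
      rcases mul_eq_zero.mp h1 with h | h
      · exact absurd h hDdet.ne_zero
      · simpa using h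
    rw [hX0]
    have hfac : (fromBlocks (0 : Matrix A B ℝ) (0 : Matrix A (Fin C.card) ℝ)
        (0 : Matrix (Fin C.card) B ℝ) D) =
          fromRows (0 : Matrix A (Fin C.card) ℝ) (1 : Matrix (Fin C.card) (Fin C.card) ℝ) *
            fromCols (0 : Matrix (Fin C.card) B ℝ) D := by
      rw [Matrix.fromRows_mul_fromCols]
      simp
    rw [hfac]
    refine le_trans (le_trans (Matrix.rank_mul_le_left _ _) (Matrix.rank_le_card_width _)) ?_
    simp
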